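/- For every real number a, the function h_a(x) := ( x / r_a(x) )·e^{−x} satisfies lim_{x→0⁺} ( h_a(x) − 1 − x log x ) / x = γ + a − 2, where γ is the Euler–Mascheroni constant. (In the paper's notation: h(r̃) = (∂r/∂r̃)(r̃/r)³ = (r̃/r)e^{−r̃} = 1 + r̃ log r̃ + (γ + a − 2) r̃ + o(r̃); this is also the transformed conformal-geodesic initial datum ẋ^τ on past null infinity.) -/

import Mathlib

open Real Filter MeasureTheory Set
set_option maxHeartbeats 1000000

noncomputable section

/-- `Eineg x = Ei(−x) = −∫_x^∞ e^{−t}/t dt`, the exponential integral. -/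
def Eineg (x : ℝ) : ℝ := -∫ t in Set.Ioi x, Real.exp (-t) / t

/-- `u_a(x) = e^{−x}/x + a + Ei(−x)` for `x > 0`. -/
def u (a x : ℝ) : ℝ := Real.exp (-x) / x + a + Eineg x

/-- `r_a(x) = 1/u_a(x)` (meaningful on intervals where `u_a > 0`). -/
def rga (a x : ℝ) : ℝ := (u a x)⁻¹


lemma integrableOn_log_mul_exp :
    IntegrableOn (fun t : ℝ => Real.log t * Real.exp (-t)) (Set.Ioi 0) := by
  rw [← Set.Ioc_union_Ioi_eq_Ioi (zero_le_one' ℝ), integrableOn_union]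
  constructor
  · -- dominated by 2 * t ^ (-1/2 : ℝ)
    have hint : IntegrableOn (fun t : ℝ => 2 * t ^ (-(1:ℝ)/2)) (Set.Ioc 0 1) := by
      refine Integrable.const_mul ?_ 2
      have h := intervalIntegral.intervalIntegrable_rpow' (a := 0) (b := 1)
        (r := -(1:ℝ)/2) (by norm_num)
      rw [intervalIntegrable_iff, uIoc_of_le (zero_le_one' ℝ)] at h
      exact h
    refine MeasureTheory.Integrable.mono hint ?_ ?_
    · refine (ContinuousOn.aestronglyMeasurable ?_ measurableSet_Ioc)
      exact (Real.continuousOn_log.mono (fun t ht => ne_of_gt ht.1)).mul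
        (Real.continuous_exp.comp continuous_neg).continuousOn
    · filter_upwards [ae_restrict_mem measurableSet_Ioc] with t ht
      have h0 : 0 < t := ht.1
      have h1 : t ≤ 1 := ht.2
      rw [Real.norm_eq_abs, Real.norm_eq_abs, abs_mul]
      have hexp : |Real.exp (-t)| ≤ 1 := by
        rw [abs_of_pos (Real.exp_pos _)]
        exact Real.exp_le_one_iff.mpr (by linarith)
      have hlog : |Real.log t| ≤ 2 * t ^ (-(1:ℝ)/2) := by
        rw [abs_of_nonpos (Real.log_nonpos h0.le h1)]
        have hs : Real.log t = 2 * Real.log (t ^ ((1:ℝ)/2)) := by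
          rw [Real.log_rpow h0]; ring
        have hpos : (0:ℝ) < t ^ ((1:ℝ)/2) := Real.rpow_pos_of_pos h0 _
        have hb : 1 - (t ^ ((1:ℝ)/2))⁻¹ ≤ Real.log (t ^ ((1:ℝ)/2)) := by
          have h := Real.log_le_sub_one_of_pos (inv_pos.mpr hpos)
          rw [Real.log_inv] at h; linarith
        have hinv : (t ^ ((1:ℝ)/2))⁻¹ = t ^ (-(1:ℝ)/2) := by
          rw [← Real.rpow_neg h0.le]; norm_num
        nlinarith [Real.rpow_pos_of_pos h0 (-(1:ℝ)/2)]
      calc |Real.log t| * |Real.exp (-t)| ≤ |Real.log t| * 1 :=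
            mul_le_mul_of_nonneg_left hexp (abs_nonneg _)
        _ = |Real.log t| := mul_one _
        _ ≤ 2 * t ^ (-(1:ℝ)/2) := hlog
        _ ≤ |2 * t ^ (-(1:ℝ)/2)| := le_abs_self _
        _ = ‖2 * t ^ (-(1:ℝ)/2)‖ := rfl
  · -- dominated by exp(-t) * t
    have hint : IntegrableOn (fun t : ℝ => Real.exp (-t) * t ^ ((2:ℝ) - 1)) (Set.Ioi 1) :=
      (Real.GammaIntegral_convergent (by norm_num : (0:ℝ) < 2)).mono_set
        (Set.Ioi_subset_Ioi zero_le_one)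
    refine MeasureTheory.Integrable.mono hint ?_ ?_
    · refine (ContinuousOn.aestronglyMeasurable ?_ measurableSet_Ioi)
      exact (Real.continuousOn_log.mono (fun t ht => ne_of_gt (lt_trans one_pos ht))).mul
        (Real.continuous_exp.comp continuous_neg).continuousOn
    · filter_upwards [ae_restrict_mem measurableSet_Ioi] with t ht
      have h1 : (1:ℝ) < t := ht
      have h0 : (0:ℝ) < t := lt_trans one_pos h1
      rw [Real.norm_eq_abs, Real.norm_eq_abs, abs_mul]
      have hlog : |Real.log t| ≤ t := by
        rw [abs_of_nonneg (Real.log_nonneg h1.le)]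
        linarith [Real.log_le_sub_one_of_pos h0]
      have : |Real.log t| * |Real.exp (-t)| ≤ t * Real.exp (-t) := by
        rw [abs_of_pos (Real.exp_pos _)]
        exact mul_le_mul_of_nonneg_right hlog (Real.exp_pos _).le
      calc |Real.log t| * |Real.exp (-t)| ≤ t * Real.exp (-t) := this
        _ = Real.exp (-t) * t ^ ((2:ℝ)-1) := by rw [show (2:ℝ)-1 = 1 by norm_num, Real.rpow_one]; ring
        _ ≤ |Real.exp (-t) * t ^ ((2:ℝ)-1)| := le_abs_self _

lemma integral_log_mul_exp :
    ∫ t in Set.Ioi (0:ℝ), Real.log t * Real.exp (-t) = -Real.eulerMascheroniConstant := by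
  have h2 : HasDerivAt Complex.GammaIntegral
      (∫ t : ℝ in Set.Ioi 0, (t:ℂ) ^ ((1:ℂ) - 1) * (Real.log t * Real.exp (-t))) 1 :=
    Complex.hasDerivAt_GammaIntegral (by norm_num)
  have hev : Complex.Gamma =ᶠ[nhds (1:ℂ)] Complex.GammaIntegral := by
    have hopen : IsOpen {z : ℂ | 0 < z.re} := isOpen_lt continuous_const Complex.continuous_re
    filter_upwards [hopen.mem_nhds (by norm_num : (0:ℝ) < (1:ℂ).re)] with z hz
    exact Complex.Gamma_eq_integral hz
  have h2' : HasDerivAt Complex.Gamma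
      (∫ t : ℝ in Set.Ioi 0, (t:ℂ) ^ ((1:ℂ) - 1) * (Real.log t * Real.exp (-t))) 1 :=
    h2.congr_of_eventuallyEq hev
  have h1 : HasDerivAt Complex.Gamma (-(Real.eulerMascheroniConstant:ℂ)) 1 := by
    exact_mod_cast Complex.hasDerivAt_Gamma_one
  have key := h1.unique h2'
  have hsimp : (∫ t : ℝ in Set.Ioi 0, (t:ℂ) ^ ((1:ℂ) - 1) * (Real.log t * Real.exp (-t)))
      = ((∫ t in Set.Ioi (0:ℝ), Real.log t * Real.exp (-t) : ℝ) : ℂ) := by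
    rw [show ((∫ t in Set.Ioi (0:ℝ), Real.log t * Real.exp (-t) : ℝ) : ℂ)
        = ∫ t in Set.Ioi (0:ℝ), ((Real.log t * Real.exp (-t) : ℝ) : ℂ) from
      (integral_ofReal).symm]
    refine setIntegral_congr_fun measurableSet_Ioi (fun t ht => ?_)
    simp
  rw [hsimp] at key
  exact_mod_cast key.symm

lemma integrableOn_exp_div {x : ℝ} (hx : 0 < x) :
    IntegrableOn (fun t : ℝ => Real.exp (-t) / t) (Set.Ioi x) := by
  have hint : IntegrableOn (fun t : ℝ => x⁻¹ * Real.exp (-(1:ℝ) * t)) (Set.Ioi x) :=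
    (exp_neg_integrableOn_Ioi x one_pos).const_mul _
  refine MeasureTheory.Integrable.mono hint ?_ ?_
  · refine (ContinuousOn.aestronglyMeasurable ?_ measurableSet_Ioi)
    exact (Real.continuous_exp.comp continuous_neg).continuousOn.div continuousOn_id
      (fun t ht => ne_of_gt (lt_trans hx ht))
  · filter_upwards [ae_restrict_mem measurableSet_Ioi] with t ht
    have h0 : 0 < t := lt_trans hx ht
    rw [Real.norm_eq_abs, Real.norm_eq_abs, abs_of_pos (by positivity),
      abs_of_pos (by positivity : (0:ℝ) < x⁻¹ * Real.exp (-(1:ℝ) * t)), neg_one_mul,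
      div_eq_mul_inv, mul_comm x⁻¹]
    exact mul_le_mul_of_nonneg_left (inv_anti₀ hx (le_of_lt ht)) (Real.exp_pos _).le

lemma tendsto_exp_mul_log_atTop :
    Tendsto (fun t : ℝ => Real.exp (-t) * Real.log t) atTop (nhds 0) := by
  refine squeeze_zero_norm' (a := fun n : ℝ => n ^ 1 * Real.exp (-n)) ?_
    (tendsto_pow_mul_exp_neg_atTop_nhds_zero 1)
  filter_upwards [eventually_ge_atTop (1:ℝ)] with t ht
  have h0 : (0:ℝ) < t := lt_of_lt_of_le one_pos ht
  rw [Real.norm_eq_abs, abs_mul, abs_of_pos (Real.exp_pos _),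
    abs_of_nonneg (Real.log_nonneg ht), pow_one, mul_comm (Real.exp (-t))]
  exact mul_le_mul_of_nonneg_right
    (by linarith [Real.log_le_sub_one_of_pos h0]) (Real.exp_pos _).le

lemma Eineg_eq {x : ℝ} (hx : 0 < x) :
    Eineg x = Real.exp (-x) * Real.log x - ∫ t in Set.Ioi x, Real.log t * Real.exp (-t) := by
  have hlogint : IntegrableOn (fun t : ℝ => Real.log t * Real.exp (-t)) (Set.Ioi x) :=
    integrableOn_log_mul_exp.mono_set (Set.Ioi_subset_Ioi hx.le)
  have hderiv : ∀ t ∈ Set.Ioi x, HasDerivAt (fun t => Real.exp (-t) * Real.log t)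
      (Real.exp (-t) / t - Real.log t * Real.exp (-t)) t := by
    intro t ht
    have h0 : 0 < t := lt_trans hx ht
    have h1 : HasDerivAt (fun t : ℝ => Real.exp (-t)) (-Real.exp (-t)) t := by
      simpa using (hasDerivAt_neg t).exp
    have h2 : HasDerivAt Real.log t⁻¹ t := Real.hasDerivAt_log (ne_of_gt h0)
    have := h1.mul h2
    refine this.congr_deriv ?_
    ring
  have hftc := MeasureTheory.integral_Ioi_of_hasDerivAt_of_tendsto
    (f := fun t => Real.exp (-t) * Real.log t)
    (f' := fun t => Real.exp (-t) / t - Real.log t * Real.exp (-t))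
    (a := x) (m := 0)
    (by
      refine ContinuousWithinAt.mul ?_ ?_
      · exact (Real.continuous_exp.comp continuous_neg).continuousWithinAt
      · exact (Real.continuousAt_log (ne_of_gt hx)).continuousWithinAt)
    hderiv
    ((integrableOn_exp_div hx).sub hlogint)
    tendsto_exp_mul_log_atTop
  rw [MeasureTheory.integral_sub (integrableOn_exp_div hx) hlogint] at hftc
  unfold Eineg
  linarith [hftc]

lemma tendsto_tail :
    Tendsto (fun x => ∫ t in Set.Ioi x, Real.log t * Real.exp (-t))
      (nhdsWithin 0 (Set.Ioi 0)) (nhds (-Real.eulerMascheroniConstant)) := by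
  rw [← integral_log_mul_exp]
  have hii : IntervalIntegrable (fun t : ℝ => Real.log t * Real.exp (-t)) volume 0 1 := by
    rw [intervalIntegrable_iff, uIoc_of_le (zero_le_one' ℝ)]
    exact integrableOn_log_mul_exp.mono_set Set.Ioc_subset_Ioi_self
  have hcont : ContinuousWithinAt
      (fun b => ∫ t in (0:ℝ)..b, Real.log t * Real.exp (-t)) (Set.Icc 0 1) 0 := by
    apply intervalIntegral.continuousWithinAt_primitive (measure_singleton (0:ℝ))
    simpa using hii
  have hzero : Tendsto (fun b => ∫ t in (0:ℝ)..b, Real.log t * Real.exp (-t))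
      (nhdsWithin 0 (Set.Ioi 0)) (nhds 0) := by
    have h1 : Tendsto (fun b => ∫ t in (0:ℝ)..b, Real.log t * Real.exp (-t))
        (nhdsWithin 0 (Set.Icc 0 1))
        (nhds (∫ t in (0:ℝ)..(0:ℝ), Real.log t * Real.exp (-t))) := hcont
    rw [intervalIntegral.integral_same] at h1
    refine h1.mono_left ?_
    rw [← nhdsWithin_Ioo_eq_nhdsGT (zero_lt_one' ℝ)]
    exact nhdsWithin_mono _ Set.Ioo_subset_Icc_self
  have hmain : Tendsto (fun x => (∫ t in Set.Ioi (0:ℝ), Real.log t * Real.exp (-t))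
        - ∫ t in (0:ℝ)..x, Real.log t * Real.exp (-t))
      (nhdsWithin 0 (Set.Ioi 0))
      (nhds (∫ t in Set.Ioi (0:ℝ), Real.log t * Real.exp (-t))) := by
    simpa using (tendsto_const_nhds
      (x := ∫ t in Set.Ioi (0:ℝ), Real.log t * Real.exp (-t))
      (f := nhdsWithin (0:ℝ) (Set.Ioi 0))).sub hzero
  refine hmain.congr' ?_
  filter_upwards [self_mem_nhdsWithin] with x hx
  have hx0 : (0:ℝ) < x := hx
  have hsplit : ∫ t in Set.Ioi (0:ℝ), Real.log t * Real.exp (-t)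
      = (∫ t in Set.Ioc 0 x, Real.log t * Real.exp (-t))
        + ∫ t in Set.Ioi x, Real.log t * Real.exp (-t) := by
    rw [← MeasureTheory.setIntegral_union (Set.Ioc_disjoint_Ioi le_rfl) measurableSet_Ioi
      (integrableOn_log_mul_exp.mono_set Set.Ioc_subset_Ioi_self)
      (integrableOn_log_mul_exp.mono_set (Set.Ioi_subset_Ioi hx0.le)),
      Set.Ioc_union_Ioi_eq_Ioi hx0.le]
  rw [hsplit, intervalIntegral.integral_of_le hx0.le]
  ring

lemma tendsto_exp_sub_one_mul_log :
    Tendsto (fun x => (Real.exp (-x) - 1) * Real.log x) (nhdsWithin 0 (Set.Ioi 0)) (nhds 0) := by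
  refine squeeze_zero_norm' (a := fun x : ℝ => ‖x * Real.log x‖) ?_ ?_
  · filter_upwards [self_mem_nhdsWithin] with x hx
    have hx0 : (0:ℝ) < x := hx
    rw [Real.norm_eq_abs, Real.norm_eq_abs, abs_mul, abs_mul]
    refine mul_le_mul_of_nonneg_right ?_ (abs_nonneg _)
    have h1 : Real.exp (-x) ≤ 1 := Real.exp_le_one_iff.mpr (by linarith)
    rw [abs_of_nonpos (by linarith), abs_of_pos hx0]
    have := Real.add_one_le_exp (-x)
    linarith
  · have h : Tendsto (fun x : ℝ => x * Real.log x) (nhds 0) (nhds 0) := by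
      simpa using Real.continuous_mul_log.tendsto 0
    simpa using (h.mono_left nhdsWithin_le_nhds).norm

lemma tendsto_Eineg_sub_log :
    Tendsto (fun x => Eineg x - Real.log x) (nhdsWithin 0 (Set.Ioi 0))
      (nhds Real.eulerMascheroniConstant) := by
  have h := tendsto_exp_sub_one_mul_log.add tendsto_tail.neg
  rw [show (0:ℝ) + -(-Real.eulerMascheroniConstant) = Real.eulerMascheroniConstant by ring] at h
  refine h.congr' ?_
  filter_upwards [self_mem_nhdsWithin] with x hx
  rw [Eineg_eq hx]
  ring

/-- For every real `a`, the function `h_a(x) = (x/r_a(x)) e^{−x}` satisfies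
`lim_{x→0⁺} (h_a(x) − 1 − x log x)/x = γ + a − 2`. -/
theorem stmt_8 (a : ℝ) :
    Filter.Tendsto
      (fun x => ((x / rga a x) * Real.exp (-x) - 1 - x * Real.log x) / x)
      (nhdsWithin 0 (Set.Ioi 0))
      (nhds (Real.eulerMascheroniConstant + a - 2)) := by
  have h1 : HasDerivAt (fun x : ℝ => Real.exp (-x)) (-1) 0 := by
    simpa using (hasDerivAt_neg (0:ℝ)).exp
  have hd : HasDerivAt (fun x : ℝ => Real.exp (-x) * Real.exp (-x)) (-2) 0 := by
    have h2 := h1.mul h1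
    norm_num at h2
    exact h2
  have T1 : Tendsto (fun x => (Real.exp (-x) * Real.exp (-x) - 1) / x)
      (nhdsWithin 0 (Set.Ioi 0)) (nhds (-2)) := by
    have hs := hasDerivAt_iff_tendsto_slope.mp hd
    have hs' := hs.mono_left
      (nhdsWithin_mono (0:ℝ) (fun x hx => ne_of_gt hx : Set.Ioi 0 ⊆ {(0:ℝ)}ᶜ))
    refine hs'.congr' ?_
    filter_upwards [self_mem_nhdsWithin] with x hx
    simp [slope_fun_def, Real.exp_zero, div_eq_inv_mul]
  have T2 : Tendsto (fun x : ℝ => a * Real.exp (-x)) (nhdsWithin 0 (Set.Ioi 0)) (nhds a) := by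
    have hc : Continuous fun x : ℝ => a * Real.exp (-x) := by continuity
    simpa using (hc.tendsto 0).mono_left nhdsWithin_le_nhds
  have Texp : Tendsto (fun x : ℝ => Real.exp (-x)) (nhdsWithin 0 (Set.Ioi 0)) (nhds 1) := by
    have hc : Continuous fun x : ℝ => Real.exp (-x) := by continuity
    simpa using (hc.tendsto 0).mono_left nhdsWithin_le_nhds
  have T3 := Texp.mul tendsto_Eineg_sub_log
  have H := ((T1.add T2).add T3).add tendsto_exp_sub_one_mul_log
  rw [show Real.eulerMascheroniConstant + a - 2
      = (((-2) + a) + 1 * Real.eulerMascheroniConstant) + 0 by ring]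
  refine H.congr' ?_
  filter_upwards [self_mem_nhdsWithin] with x hx
  have hx0 : (0:ℝ) < x := hx
  have hxne : x ≠ 0 := ne_of_gt hx0
  show _ = ((x / rga a x) * Real.exp (-x) - 1 - x * Real.log x) / x
  rw [rga, u, show x / (Real.exp (-x)/x + a + Eineg x)⁻¹
      = x * (Real.exp (-x)/x + a + Eineg x) from by rw [div_eq_mul_inv, inv_inv]]
  field_simp
  ring
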